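/- For the Fourier matrix u on ℤ/nℤ and any r, s ∈ ℤ/nℤ, the function e_{r,s} (k,l) = ε(r*k + s*l) satisfies D_u e_{r,s} = ε(r*s) • C_u e_{r,s}; that is, e_{r,s} is an eigenfunction of the Berezin transform I_u = C_u⁻¹ ∘ D_u with eigenvalue ε(r*s). -/

import Mathlib

open Finset Matrix

/-- The symbol-to-operator map `C_u`. -/
noncomputable def Cmap {ι : Type*} [Fintype ι] (u : Matrix ι ι ℂ) (f : ι × ι → ℂ) :
    Matrix ι ι ℂ :=
  fun k k' => ∑ l, u k l * f (k, l) * (starRingEnd ℂ) (u k' l)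

/-- The symbol-to-operator map `D_u`. -/
noncomputable def Dmap {ι : Type*} [Fintype ι] (u : Matrix ι ι ℂ) (f : ι × ι → ℂ) :
    Matrix ι ι ℂ :=
  fun k k' => ∑ l, u k l * f (k', l) * (starRingEnd ℂ) (u k' l)

/-- for the Fourier matrix `u k l = ε(k·l)/√n` on `ℤ/nℤ`, the function
`e (k,l) = ε(r·k + s·l)` is an eigenfunction of the Berezin transform `I_u` with eigenvalue
`ε(r·s)`; the eigenvalue equation `I_u e = ε(r·s) e` is expressed as
`D_u e = ε(r·s) • C_u e`. -/
theorem stmt11 (n : ℕ) [NeZero n] (hn : 1 ≤ n)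
    (ε : ZMod n → ℂ)
    (hε : ∀ m : ZMod n, ε m = Complex.exp (2 * Real.pi * Complex.I * m.val / n))
    (u : Matrix (ZMod n) (ZMod n) ℂ)
    (hu : ∀ k l, u k l = ε (k * l) / Real.sqrt n)
    (r s : ZMod n) (e : ZMod n × ZMod n → ℂ)
    (he : ∀ p : ZMod n × ZMod n, e p = ε (r * p.1 + s * p.2)) :
    Dmap u e = ε (r * s) • Cmap u e := by
  have hn0 : (n : ℂ) ≠ 0 := Nat.cast_ne_zero.mpr (NeZero.ne n)
  set ζ := Complex.exp (2 * Real.pi * Complex.I / n) with hζdef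
  have hζ : IsPrimitiveRoot ζ n := Complex.isPrimitiveRoot_exp n (NeZero.ne n)
  have hεz : ∀ m : ZMod n, ε m = ζ ^ m.val := by
    intro m
    rw [hε, hζdef, ← Complex.exp_nat_mul]
    ring_nf
  have hadd : ∀ a b : ZMod n, ε (a + b) = ε a * ε b := by
    intro a b
    rw [hεz, hεz, hεz, ZMod.val_add, ← pow_eq_pow_mod _ hζ.pow_eq_one, pow_add]
  have hzero : ε 0 = 1 := by rw [hεz]; simp
  have hinv : ∀ m : ZMod n, ε (-m) = (ε m)⁻¹ := by
    intro m
    refine eq_inv_of_mul_eq_one_left ?_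
    rw [← hadd, neg_add_cancel, hzero]
  have hconjζ : (starRingEnd ℂ) ζ = ζ⁻¹ := by
    rw [hζdef, ← Complex.exp_conj, ← Complex.exp_neg]
    congr 1
    simp [Complex.conj_I, map_ofNat]
    ring
  have hconj : ∀ m : ZMod n, (starRingEnd ℂ) (ε m) = ε (-m) := by
    intro m
    rw [hεz, map_pow, hconjζ, inv_pow, hinv, hεz]
  have hsum : ∀ t : ZMod n, t ≠ 0 → ∑ l : ZMod n, ε (t * l) = 0 := by
    intro t ht
    have hx1 : ε t ≠ 1 := by
      rw [hεz]
      exact hζ.pow_ne_one_of_pos_of_lt (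
        (fun h => ht ((ZMod.val_eq_zero t).mp h))) (ZMod.val_lt t)
    have h2 : ε t * ∑ l : ZMod n, ε (t * l) = ∑ l : ZMod n, ε (t * l) := by
      rw [Finset.mul_sum]
      refine Fintype.sum_equiv (Equiv.addRight (1 : ZMod n)) _ _ (fun l => ?_)
      simp only [Equiv.coe_addRight]
      rw [mul_add, mul_one, hadd, mul_comm]
    have h3 : (ε t - 1) * ∑ l : ZMod n, ε (t * l) = 0 := by
      rw [sub_mul, one_mul, h2, sub_self]
    rcases mul_eq_zero.mp h3 with h | h
    · exact absurd (sub_eq_zero.mp h) hx1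
    · exact h
  have hsq : (Real.sqrt n : ℂ) * Real.sqrt n = n := by
    rw [← Complex.ofReal_mul, Real.mul_self_sqrt (Nat.cast_nonneg n)]
    push_cast; ring
  have hsne : (Real.sqrt n : ℂ) ≠ 0 := by
    intro h
    apply hn0
    rw [← hsq, h, mul_zero]
  funext k k'
  have hD : ∀ l : ZMod n, u k l * e (k', l) * (starRingEnd ℂ) (u k' l)
      = ε (r * k') / n * ε ((k - k' + s) * l) := by
    intro l
    rw [hu, hu, he, map_div₀, hconj, Complex.conj_ofReal]
    have h1 : ε (r * k' + s * l) = ε (r * k') * ε (s * l) := hadd _ _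
    have h2 : ε ((k - k' + s) * l) = ε (k * l) * (ε (-(k' * l)) * ε (s * l)) := by
      rw [← hadd, ← hadd]; ring_nf
    rw [h1, h2]
    field_simp
    ring_nf
    rw [sq, hsq]
  have hC : ∀ l : ZMod n, u k l * e (k, l) * (starRingEnd ℂ) (u k' l)
      = ε (r * k) / n * ε ((k - k' + s) * l) := by
    intro l
    rw [hu, hu, he, map_div₀, hconj, Complex.conj_ofReal]
    have h1 : ε (r * k + s * l) = ε (r * k) * ε (s * l) := hadd _ _
    have h2 : ε ((k - k' + s) * l) = ε (k * l) * (ε (-(k' * l)) * ε (s * l)) := by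
      rw [← hadd, ← hadd]; ring_nf
    rw [h1, h2]
    field_simp
    ring_nf
    rw [sq, hsq]
  show Dmap u e k k' = ε (r * s) * Cmap u e k k'
  unfold Dmap Cmap
  rw [Finset.sum_congr rfl fun l _ => hD l, Finset.sum_congr rfl fun l _ => hC l,
    ← Finset.mul_sum, ← Finset.mul_sum]
  by_cases hts : k - k' + s = 0
  · have hk' : k' = k + s := by linear_combination -hts
    have hval : ε (r * k') = ε (r * s) * ε (r * k) := by
      rw [← hadd, hk']; ring_nf
    simp only [hts, zero_mul, hzero]
    rw [Finset.sum_const, hval]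
    ring
  · rw [hsum _ hts]
    ring
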